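/- Cayley's theorem for groupoids: Let C be a groupoid (a category in which every morphism is an isomorphism) whose objects and arrows form sets, and let Arr(C) denote the set of all arrows of C, i.e. the sigma type Σ (x y : C), (x ⟶ y). Let Sym(X) denote the symmetric groupoid of a set X: the groupoid whose objects are the subsets A : Set X and whose morphisms from A to B are the bijections ↥A ≃ ↥B, with composition of bijections as composition. Then there exists a functor F : C ⥤ Sym(Arr(C)) which is injective on objects and faithful (injective on each hom-set); hence C is isomorphic to a subgroupoid of the symmetric groupoid of its arrow set. -/

import Mathlib

open CategoryTheory

universe u v

/-- The symmetric groupoid of a set `X`: objects are subsets of `X`,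
morphisms from `A` to `B` are the bijections `↥A ≃ ↥B`. -/
def SymGroupoid (X : Type u) : Type u := Set X

instance (X : Type u) : Groupoid (SymGroupoid X) where
  Hom A B := Set.Elem A ≃ Set.Elem B
  id A := Equiv.refl (Set.Elem A)
  comp f g := f.trans g
  inv f := f.symm
  inv_comp f := Equiv.symm_trans_self f
  comp_inv f := Equiv.self_trans_symm f

variable {C : Type u} [Groupoid.{v} C]

/-- Arrows into `x` as a set of all arrows. -/
def cayleyObj (x : C) : SymGroupoid (Σ (p q : C), p ⟶ q) := {a | a.2.1 = x}

def cayleyEquiv1 (x : C) : Set.Elem (cayleyObj x) ≃ Σ p : C, p ⟶ x where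
  toFun a := ⟨a.1.1, a.1.2.2 ≫ eqToHom a.2⟩
  invFun b := ⟨⟨b.1, x, b.2⟩, rfl⟩
  left_inv := by rintro ⟨⟨p, q, g⟩, (h : q = x)⟩; subst h; simp [eqToHom_refl q rfl]
  right_inv := by rintro ⟨p, g⟩; simp [eqToHom_refl x rfl]

def cayleyPost {x y : C} (f : x ⟶ y) : (Σ p : C, p ⟶ x) ≃ Σ p : C, p ⟶ y where
  toFun b := ⟨b.1, b.2 ≫ f⟩
  invFun b := ⟨b.1, b.2 ≫ Groupoid.inv f⟩
  left_inv := by rintro ⟨p, g⟩; simp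
  right_inv := by rintro ⟨p, g⟩; simp

def cayleyFunctor : C ⥤ SymGroupoid (Σ (x y : C), x ⟶ y) where
  obj := cayleyObj
  map {x y} f := (cayleyEquiv1 x).trans ((cayleyPost f).trans (cayleyEquiv1 y).symm)
  map_id x := by
    apply Equiv.ext; intro a; apply Subtype.ext
    obtain ⟨⟨p, q, g⟩, (h : q = x)⟩ := a
    subst h
    show (((cayleyEquiv1 q).symm ⟨_, _⟩ : Set.Elem (cayleyObj q)) : Σ p q : C, p ⟶ q) = _
    simp [cayleyPost, cayleyEquiv1, CategoryStruct.id, eqToHom_refl q rfl]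
  map_comp {x y z} f g := by
    apply Equiv.ext; intro a; apply Subtype.ext
    show (((cayleyEquiv1 z).symm ⟨_, _⟩ : Set.Elem (cayleyObj z)) : Σ p q : C, p ⟶ q) =
      (((cayleyEquiv1 z).symm ⟨_, _⟩ : Set.Elem (cayleyObj z)) : Σ p q : C, p ⟶ q)
    simp [cayleyPost, cayleyEquiv1, CategoryStruct.comp]

/-- Cayley's theorem for groupoids: every groupoid embeds (injectively on
objects and faithfully) into the symmetric groupoid of its set of arrows. -/
theorem groupoid_cayley (C : Type u) [Groupoid.{v} C] :
    ∃ F : C ⥤ SymGroupoid (Σ (x y : C), x ⟶ y),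
      Function.Injective F.obj ∧ F.Faithful := by
  refine ⟨cayleyFunctor, ?_, ?_⟩
  · intro x y h
    have h' : (cayleyObj x : Set (Σ (p q : C), p ⟶ q)) = cayleyObj y := h
    exact (Set.ext_iff.mp h' ⟨x, x, 𝟙 x⟩).mp rfl
  · constructor
    intro x y f g h
    have := congrArg (fun e : Set.Elem (cayleyObj x) ≃ Set.Elem (cayleyObj y) =>
      (e ⟨⟨x, x, 𝟙 x⟩, rfl⟩ : Set.Elem (cayleyObj y)).1) h
    simp only [cayleyFunctor, cayleyEquiv1, cayleyPost, Equiv.trans_apply,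
      Equiv.coe_fn_mk, Equiv.coe_fn_symm_mk] at this
    have h2 := eq_of_heq (Sigma.mk.inj_iff.mp this).2
    have h3 := eq_of_heq (Sigma.mk.inj_iff.mp h2).2
    simpa using h3
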